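/- arXiv:2203.11974 — 3 statements merged into one kernel-verified Lean document; each statement's English description precedes it below -/
import Mathlib

section
/- Let Φ be a flow on S^{d-1} commuting with the antipodal map, and let M be a chain transitive set of the induced flow on ℝP^{d-1}. Then the preimage {v ∈ S^{d-1} : p(v) ∈ M} is the union of at most two chain transitive sets M⁺ and M⁻ for the flow on S^{d-1}, and M⁺ = -M⁻. -/
open Metric Finset

noncomputable section

abbrev Vec (d : ℕ) := EuclideanSpace ℝ (Fin d)

def ChainIn {X : Type*} [MetricSpace X] (Φ : ℝ → X → X) (S : Set X)
    (ε T : ℝ) (x y : X) : Prop :=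
  ∃ (n : ℕ) (u : ℕ → X) (t : ℕ → ℝ), 1 ≤ n ∧ u 0 = x ∧ u n = y ∧
    (∀ i ≤ n, u i ∈ S) ∧ (∀ i < n, T ≤ t i) ∧
    ∀ i < n, dist (Φ (t i) (u i)) (u (i + 1)) < ε

def OmegaIn {X : Type*} [MetricSpace X] (Φ : ℝ → X → X) (S : Set X) (x : X) : Set X :=
  {y | ∀ ε T : ℝ, 0 < ε → 0 < T → ChainIn Φ S ε T x y}

def ChainTransOn {X : Type*} [MetricSpace X] (Φ : ℝ → X → X) (S A : Set X) : Prop :=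
  ∀ x ∈ A, ∀ y ∈ A, y ∈ OmegaIn Φ S x

structure IsFlow {X : Type*} [MetricSpace X] (Φ : ℝ → X → X) : Prop where
  cont : Continuous fun q : ℝ × X => Φ q.1 q.2
  init : ∀ x, Φ 0 x = x
  comp : ∀ s t x, Φ (s + t) x = Φ s (Φ t x)

def sphere1 (d : ℕ) : Set (Vec d) := {v | ‖v‖ = 1}

structure IsLinearFlow (d : ℕ) (Φ : ℝ → Vec d → Vec d) : Prop where
  cont : Continuous fun q : ℝ × Vec d => Φ q.1 q.2
  lin : ∀ t, IsLinearMap ℝ (Φ t)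
  init : ∀ x, Φ 0 x = x
  comp : ∀ s t x, Φ (s + t) x = Φ s (Φ t x)

def sphFlow {d : ℕ} (Φ : ℝ → Vec d → Vec d) : ℝ → Vec d → Vec d :=
  fun t v => ‖Φ t v‖⁻¹ • Φ t v

abbrev PVec (d : ℕ) := WithLp 2 (Vec d × ℝ)

def emb {d : ℕ} (v : Vec d) (r : ℝ) : PVec d := (WithLp.equiv 2 (Vec d × ℝ)).symm (v, r)

def piP {d : ℕ} (v : Vec d) : PVec d := ‖emb v 1‖⁻¹ • emb v 1

def extFlow {d : ℕ} (Φ : ℝ → Vec d → Vec d) : ℝ → PVec d → PVec d :=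
  fun t p => emb (Φ t ((WithLp.equiv 2 (Vec d × ℝ)) p).1) ((WithLp.equiv 2 (Vec d × ℝ)) p).2

def poinFlow {d : ℕ} (Φ : ℝ → Vec d → Vec d) : ℝ → PVec d → PVec d :=
  fun t p => ‖extFlow Φ t p‖⁻¹ • extFlow Φ t p

def openHemi (d : ℕ) : Set (PVec d) :=
  {p | ‖p‖ = 1 ∧ 0 < ((WithLp.equiv 2 (Vec d × ℝ)) p).2}

def closedHemi (d : ℕ) : Set (PVec d) :=
  {p | ‖p‖ = 1 ∧ 0 ≤ ((WithLp.equiv 2 (Vec d × ℝ)) p).2}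

def matFlow (d : ℕ) (A : Matrix (Fin d) (Fin d) ℝ) : ℝ → Vec d → Vec d :=
  fun t x => (EuclideanSpace.equiv (Fin d) ℝ).symm
    ((NormedSpace.exp (t • A)).mulVec (EuclideanSpace.equiv (Fin d) ℝ x))

structure IsProjQuot {P : Type*} [MetricSpace P] (d : ℕ) (p : Vec d → P)
    (Φ : ℝ → Vec d → Vec d) (Ψ : ℝ → P → P) : Prop where
  surj : ∀ q : P, ∃ v ∈ sphere1 d, p v = q
  fib : ∀ v ∈ sphere1 d, ∀ w ∈ sphere1 d, (p v = p w ↔ v = w ∨ v = -w)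
  dist_eq : ∀ v ∈ sphere1 d, ∀ w ∈ sphere1 d,
    dist (p v) (p w) = min (dist v w) (dist v (-w))
  conj : ∀ t : ℝ, ∀ v ∈ sphere1 d, Ψ t (p v) = p (Φ t v)

section Aux

variable {X : Type*} [MetricSpace X] {Φ : ℝ → X → X} {S : Set X}

lemma chainIn_mono {ε ε' T T' : ℝ} {x y : X} (h : ChainIn Φ S ε T x y)
    (hε : ε ≤ ε') (hT : T' ≤ T) : ChainIn Φ S ε' T' x y := by
  obtain ⟨n, u, t, hn, h0, h1, h2, h3, h4⟩ := h
  exact ⟨n, u, t, hn, h0, h1, h2, fun i hi => hT.trans (h3 i hi),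
    fun i hi => (h4 i hi).trans_le hε⟩

lemma chainIn_single {ε T s : ℝ} {a b : X}
    (ha : a ∈ S) (hb : b ∈ S) (hT : T ≤ s) (hd : dist (Φ s a) b < ε) :
    ChainIn Φ S ε T a b := by
  refine ⟨1, fun j => if j = 0 then a else b, fun _ => s, le_rfl, rfl, rfl, ?_,
    fun _ _ => hT, ?_⟩
  · intro i _; dsimp only; split_ifs <;> assumption
  · intro i hi
    have : i = 0 := by omega
    subst this
    simpa using hd

lemma chainIn_trans {ε T : ℝ} {x y z : X} (h1 : ChainIn Φ S ε T x y)
    (h2 : ChainIn Φ S ε T y z) : ChainIn Φ S ε T x z := by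
  obtain ⟨n, u, t, hn, hu0, hun, hmem, ht, hd⟩ := h1
  obtain ⟨m, u', t', hm, hu0', hum', hmem', ht', hd'⟩ := h2
  refine ⟨n + m, fun i => if i ≤ n then u i else u' (i - n),
    fun i => if i < n then t i else t' (i - n), by omega, by simpa using hu0, ?_, ?_, ?_, ?_⟩
  · have h : ¬ (n + m ≤ n) := by omega
    simp only [h, if_false, Nat.add_sub_cancel_left, hum']
  · intro i hi
    dsimp only
    split_ifs with h
    · exact hmem i h
    · exact hmem' (i - n) (by omega)
  · intro i hi
    dsimp only
    split_ifs with h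
    · exact ht i h
    · exact ht' (i - n) (by omega)
  · intro i hi
    by_cases h : i < n
    · have h1 : i ≤ n := by omega
      have h2 : i + 1 ≤ n := by omega
      simp only [h, if_pos, h1, h2]
      exact hd i h
    · have hin : n ≤ i := not_lt.mp h
      have e1 : (if i ≤ n then u i else u' (i - n)) = u' (i - n) := by
        split_ifs with h'
        · have : i = n := by omega
          subst this
          simp [hun, hu0'.symm]
        · rfl
      have e2 : ¬ (i + 1 ≤ n) := by omega
      have e3 : i + 1 - n = (i - n) + 1 := by omega
      simp only [h, if_false, e1, e2, e3]
      exact hd' (i - n) (by omega)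

end Aux

lemma neg_mem_sphere1 {d : ℕ} {v : Vec d} (hv : v ∈ sphere1 d) : -v ∈ sphere1 d := by
  show ‖-v‖ = 1
  rw [norm_neg]; exact hv

lemma chainIn_neg {d : ℕ} {Φ : ℝ → Vec d → Vec d}
    (hneg : ∀ (t : ℝ) (x : Vec d), Φ t (-x) = -Φ t x)
    {ε T : ℝ} {v w : Vec d} (h : ChainIn Φ (sphere1 d) ε T v w) :
    ChainIn Φ (sphere1 d) ε T (-v) (-w) := by
  obtain ⟨n, u, t, hn, hu0, hun, hmem, ht, hd⟩ := h
  refine ⟨n, fun i => -(u i), t, hn, by simp [hu0], by simp [hun], ?_, ht, ?_⟩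
  · intro i hi; exact neg_mem_sphere1 (hmem i hi)
  · intro i hi
    rw [hneg, dist_neg_neg]
    exact hd i hi

lemma lift_chain {d : ℕ} {P : Type*} [MetricSpace P] {p : Vec d → P}
    {Φ : ℝ → Vec d → Vec d} {Ψ : ℝ → P → P}
    (hq : IsProjQuot d p Φ Ψ)
    (hsph : ∀ t : ℝ, ∀ v ∈ sphere1 d, Φ t v ∈ sphere1 d)
    {ε T : ℝ} {v w : Vec d} (hv : v ∈ sphere1 d) (hw : w ∈ sphere1 d)
    (h : ChainIn Ψ Set.univ ε T (p v) (p w)) :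
    ChainIn Φ (sphere1 d) ε T v w ∨ ChainIn Φ (sphere1 d) ε T v (-w) := by
  obtain ⟨n, q, t, hn, hq0, hqn, -, ht, hd⟩ := h
  have claim : ∀ i ≤ n, ∃ a, a ∈ sphere1 d ∧ p a = q i ∧
      (ChainIn Φ (sphere1 d) ε T v a ∨ (i = 0 ∧ a = v)) := by
    intro i
    induction i with
    | zero => exact fun _ => ⟨v, hv, hq0.symm, Or.inr ⟨rfl, rfl⟩⟩
    | succ i ih =>
      intro hi
      obtain ⟨a, ha, hpa, hchain⟩ := ih (by omega)
      obtain ⟨u, hu, hpu⟩ := hq.surj (q (i + 1))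
      have hΦa : Φ (t i) a ∈ sphere1 d := hsph _ _ ha
      have hdist : min (dist (Φ (t i) a) u) (dist (Φ (t i) a) (-u)) < ε := by
        have h1 := hd i (by omega)
        rw [← hpa, ← hpu, hq.conj _ _ ha, hq.dist_eq _ hΦa _ hu] at h1
        exact h1
      obtain ⟨b, hbs, hpb, hbd⟩ : ∃ b, b ∈ sphere1 d ∧ p b = q (i + 1) ∧
          dist (Φ (t i) a) b < ε := by
        rcases min_lt_iff.mp hdist with hlt | hlt
        · exact ⟨u, hu, hpu, hlt⟩
        · refine ⟨-u, neg_mem_sphere1 hu, ?_, hlt⟩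
          rw [← hpu]
          exact (hq.fib _ (neg_mem_sphere1 hu) _ hu).mpr (Or.inr rfl)
      have hstep : ChainIn Φ (sphere1 d) ε T a b :=
        chainIn_single ha hbs (ht i (by omega)) hbd
      refine ⟨b, hbs, hpb, Or.inl ?_⟩
      rcases hchain with hc | ⟨-, rfl⟩
      · exact chainIn_trans hc hstep
      · exact hstep
  obtain ⟨a, has, hpa, hch⟩ := claim n le_rfl
  have hc : ChainIn Φ (sphere1 d) ε T v a := by
    rcases hch with hc | ⟨h0, -⟩
    · exact hc
    · omega
  rw [hqn] at hpa
  rcases (hq.fib _ has _ hw).mp hpa with rfl | rfl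
  · exact Or.inl hc
  · exact Or.inr (by simpa using hc)

theorem stmt4 {d : ℕ} {P : Type*} [MetricSpace P] (p : Vec d → P)
    (Φ : ℝ → Vec d → Vec d) (Ψ : ℝ → P → P)
    (hΦ : IsFlow Φ) (hΨ : IsFlow Ψ)
    (hsph : ∀ t : ℝ, ∀ v ∈ sphere1 d, Φ t v ∈ sphere1 d)
    (hneg : ∀ (t : ℝ) (x : Vec d), Φ t (-x) = -Φ t x)
    (hq : IsProjQuot d p Φ Ψ)
    (M : Set P) (hM : ChainTransOn Ψ Set.univ M) :
    ∃ Mp Mm : Set (Vec d),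
      ChainTransOn Φ (sphere1 d) Mp ∧ ChainTransOn Φ (sphere1 d) Mm ∧
      {v | v ∈ sphere1 d ∧ p v ∈ M} = Mp ∪ Mm ∧
      Mp = (fun x : Vec d => -x) '' Mm := by
  classical
  -- the chain relation on the sphere
  set R : Vec d → Vec d → Prop :=
    fun v w => ∀ ε T : ℝ, 0 < ε → 0 < T → ChainIn Φ (sphere1 d) ε T v w with hR
  have Rtrans : ∀ {a b c}, R a b → R b c → R a c := by
    intro a b c h1 h2 ε T hε hT
    exact chainIn_trans (h1 ε T hε hT) (h2 ε T hε hT)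
  have Rneg : ∀ {a b}, R a b → R (-a) (-b) := by
    intro a b h ε T hε hT
    exact chainIn_neg hneg (h ε T hε hT)
  -- key dichotomy
  have key : ∀ v ∈ sphere1 d, p v ∈ M → ∀ w ∈ sphere1 d, p w ∈ M →
      R v w ∨ R v (-w) := by
    intro v hv hvM w hw hwM
    by_cases hvw : R v w
    · exact Or.inl hvw
    · right
      simp only [hR] at hvw
      push_neg at hvw
      obtain ⟨ε0, T0, hε0, hT0, hnc⟩ := hvw
      intro ε T hε hT
      have hε' : 0 < min ε ε0 := lt_min hε hε0
      have hT' : 0 < max T T0 := lt_max_of_lt_left hT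
      have hchain : ChainIn Ψ Set.univ (min ε ε0) (max T T0) (p v) (p w) :=
        hM _ hvM _ hwM (min ε ε0) (max T T0) hε' hT'
      rcases lift_chain hq hsph hv hw hchain with hc | hc
      · exact absurd (chainIn_mono hc (min_le_right _ _) (le_max_right _ _)) hnc
      · exact chainIn_mono hc (min_le_left _ _) (le_max_left _ _)
  -- preimage of M
  by_cases hS : ∃ v0, v0 ∈ sphere1 d ∧ p v0 ∈ M
  · obtain ⟨v0, hv0s, hv0M⟩ := hS
    set Mp : Set (Vec d) :=
      {w | w ∈ sphere1 d ∧ p w ∈ M ∧ R v0 w ∧ R w v0} with hMp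
    refine ⟨Mp, (fun x : Vec d => -x) '' Mp, ?_, ?_, ?_, ?_⟩
    · intro w1 hw1 w2 hw2 ε T hε hT
      exact chainIn_trans (hw1.2.2.2 ε T hε hT) (hw2.2.2.1 ε T hε hT)
    · rintro - ⟨w1, hw1, rfl⟩ - ⟨w2, hw2, rfl⟩ ε T hε hT
      exact chainIn_neg hneg
        (chainIn_trans (hw1.2.2.2 ε T hε hT) (hw2.2.2.1 ε T hε hT))
    · ext w
      simp only [Set.mem_setOf_eq, Set.mem_union, Set.mem_image]
      constructor
      · rintro ⟨hws, hwM⟩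
        have hnws : -w ∈ sphere1 d := neg_mem_sphere1 hws
        have hnwM : p (-w) ∈ M := by
          rwa [(hq.fib _ hnws _ hws).mpr (Or.inr rfl)]
        have h1 := key v0 hv0s hv0M w hws hwM
        have h2 := key w hws hwM v0 hv0s hv0M
        have h2' : R w v0 ∨ R (-w) v0 := by
          rcases h2 with h | h
          · exact Or.inl h
          · right
            have := Rneg h
            rwa [neg_neg] at this
        rcases h1 with h1 | h1
        · left
          refine ⟨hws, hwM, h1, ?_⟩
          rcases h2' with h2' | h2'
          · exact h2'
          · -- R (-w) v0 and R v0 w give R (-w) w, hence R w (-w), hence R w v0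
            have hww : R (-w) w := Rtrans h2' h1
            have hww' : R w (-w) := by
              have := Rneg hww
              rwa [neg_neg] at this
            exact Rtrans hww' h2'
        · rcases h2' with h2' | h2'
          · -- R v0 (-w) and R w v0 : then R w (-w), so R (-w) w, so R v0 w
            left
            have hww : R w (-w) := Rtrans h2' h1
            have hww' : R (-w) w := by
              have := Rneg hww
              rwa [neg_neg] at this
            exact ⟨hws, hwM, Rtrans h1 hww', h2'⟩
          · right
            exact ⟨-w, ⟨hnws, hnwM, h1, h2'⟩, neg_neg w⟩
      · rintro (⟨h1, h2, -⟩ | ⟨a, ⟨h1, h2, -⟩, rfl⟩)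
        · exact ⟨h1, h2⟩
        · exact ⟨neg_mem_sphere1 h1, by
            rwa [(hq.fib _ (neg_mem_sphere1 h1) _ h1).mpr (Or.inr rfl)]⟩
    · rw [Set.image_image]
      simp only [neg_neg, Set.image_id']
  · refine ⟨∅, ∅, ?_, ?_, ?_, ?_⟩
    · intro x hx; exact absurd hx (Set.notMem_empty x)
    · intro x hx; exact absurd hx (Set.notMem_empty x)
    · ext w
      simp only [Set.mem_setOf_eq, Set.mem_union, Set.mem_empty_iff_false, or_self,
        iff_false]
      rintro ⟨h1, h2⟩
      exact hS ⟨w, h1, h2⟩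
    · simp
end
end

section
/- Let Φ be a linear flow on ℝ^d, let M ⊂ S^{d-1} be a compact chain transitive set for the induced spherical flow, and let V⁺ = {α v : α > 0, v ∈ M} be the generated cone. If V⁺ contains a half-line l = {α v₀ : α > 0}, v₀ ∈ M, such that π_P(l) is chain transitive for the induced flow on the open upper hemisphere of the Poincaré sphere S^d, then the closure of π_P(V⁺) is chain transitive for the induced flow on the closed upper hemisphere of S^d. -/
open Metric Finset

noncomputable section

section Aux
variable {d : ℕ}

lemma emb_fst (v : Vec d) (r : ℝ) : (emb v r).fst = v := rfl
lemma emb_snd (v : Vec d) (r : ℝ) : (emb v r).snd = r := rfl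

lemma norm_emb_sq (v : Vec d) (r : ℝ) : ‖emb v r‖ ^ 2 = ‖v‖ ^ 2 + r ^ 2 := by
  rw [WithLp.prod_norm_sq_eq_of_L2]
  simp [emb_fst, emb_snd, Real.norm_eq_abs, sq_abs]

lemma emb_sub (v w : Vec d) (r s : ℝ) : emb v r - emb w s = emb (v - w) (r - s) := by
  rw [emb, emb, emb, WithLp.equiv_symm_apply, ← WithLp.toLp_sub, Prod.mk_sub_mk]

lemma emb_smul (c : ℝ) (v : Vec d) (r : ℝ) : c • emb v r = emb (c • v) (c * r) := by
  rw [emb, emb, WithLp.equiv_symm_apply, ← WithLp.toLp_smul, Prod.smul_mk, smul_eq_mul]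

lemma norm_emb_zero (v : Vec d) : ‖emb v 0‖ = ‖v‖ := by
  have h := norm_emb_sq v 0
  nlinarith [norm_nonneg (emb v 0), norm_nonneg v]

lemma norm_emb_one_ge_one (v : Vec d) : 1 ≤ ‖emb v 1‖ := by
  have h := norm_emb_sq v 1
  nlinarith [norm_nonneg (emb v 1), norm_nonneg v]

lemma norm_emb_one_ge (v : Vec d) : ‖v‖ ≤ ‖emb v 1‖ := by
  have h := norm_emb_sq v 1
  nlinarith [norm_nonneg (emb v 1), norm_nonneg v]

lemma norm_emb_one_pos (v : Vec d) : 0 < ‖emb v 1‖ := lt_of_lt_of_le one_pos (norm_emb_one_ge_one v)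

lemma norm_piP (v : Vec d) : ‖piP v‖ = 1 := by
  rw [piP, norm_smul, norm_inv, norm_norm]
  exact inv_mul_cancel₀ (norm_emb_one_pos v).ne'

lemma piP_snd (v : Vec d) : (piP v).snd = ‖emb v 1‖⁻¹ := by
  rw [piP, emb_smul, emb_snd, mul_one]

lemma piP_fst (v : Vec d) : (piP v).fst = ‖emb v 1‖⁻¹ • v := by
  rw [piP, emb_smul]; rfl

lemma piP_mem_openHemi (v : Vec d) : piP v ∈ openHemi d :=
  ⟨norm_piP v, by rw [show ((WithLp.equiv 2 (Vec d × ℝ)) (piP v)).2 = (piP v).snd from rfl, piP_snd]; exact inv_pos.2 (norm_emb_one_pos v)⟩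

lemma openHemi_subset_closed : openHemi d ⊆ closedHemi d := fun p hp => ⟨hp.1, le_of_lt hp.2⟩

lemma piP_mem_closedHemi (v : Vec d) : piP v ∈ closedHemi d := openHemi_subset_closed (piP_mem_openHemi v)

end Aux
section Aux2
variable {d : ℕ}

/-- normalization is Lipschitz-ish -/
lemma norm_normalize_sub {E : Type*} [NormedAddCommGroup E] [NormedSpace ℝ E]
    (x y : E) (hx : x ≠ 0) (hy : y ≠ 0) :
    ‖‖x‖⁻¹ • x - ‖y‖⁻¹ • y‖ ≤ 2 * ‖x - y‖ / ‖x‖ := by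
  have hx' : (0:ℝ) < ‖x‖ := norm_pos_iff.2 hx
  have hy' : (0:ℝ) < ‖y‖ := norm_pos_iff.2 hy
  have key : ‖x‖⁻¹ • x - ‖y‖⁻¹ • y = ‖x‖⁻¹ • (x - y) + (‖x‖⁻¹ - ‖y‖⁻¹) • y := by
    rw [smul_sub, sub_smul]; abel
  rw [key]
  have h1 : ‖‖x‖⁻¹ • (x - y)‖ = ‖x - y‖ / ‖x‖ := by
    rw [norm_smul, norm_inv, norm_norm]; ring
  have habs : |‖y‖ - ‖x‖| ≤ ‖x - y‖ := by
    rw [abs_sub_comm]; exact abs_norm_sub_norm_le x y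
  have h2 : ‖(‖x‖⁻¹ - ‖y‖⁻¹) • y‖ ≤ ‖x - y‖ / ‖x‖ := by
    rw [norm_smul, Real.norm_eq_abs]
    have e1 : ‖x‖⁻¹ - ‖y‖⁻¹ = (‖y‖ - ‖x‖) / (‖x‖ * ‖y‖) := by
      field_simp
    rw [e1, abs_div, abs_of_pos (mul_pos hx' hy')]
    have e2 : |‖y‖ - ‖x‖| / (‖x‖ * ‖y‖) * ‖y‖ = |‖y‖ - ‖x‖| / ‖x‖ := by
      field_simp
    rw [e2]
    gcongr
  calc ‖‖x‖⁻¹ • (x - y) + (‖x‖⁻¹ - ‖y‖⁻¹) • y‖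
      ≤ ‖‖x‖⁻¹ • (x - y)‖ + ‖(‖x‖⁻¹ - ‖y‖⁻¹) • y‖ := norm_add_le _ _
    _ ≤ ‖x - y‖ / ‖x‖ + ‖x - y‖ / ‖x‖ := by rw [h1]; gcongr
    _ = 2 * ‖x - y‖ / ‖x‖ := by ring

lemma emb_one_ne_zero (v : Vec d) : emb v 1 ≠ 0 :=
  fun h => by simpa [h] using (norm_emb_one_pos v)

lemma dist_piP_le (a b : Vec d) : dist (piP a) (piP b) ≤ 2 * dist a b := by
  have h := norm_normalize_sub (emb a 1) (emb b 1) (emb_one_ne_zero a) (emb_one_ne_zero b)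
  rw [piP, piP, dist_eq_norm]
  refine le_trans h ?_
  rw [emb_sub, sub_self]
  have hd : ‖emb (a - b) 0‖ = dist a b := by rw [norm_emb_zero, dist_eq_norm]
  rw [hd]
  calc 2 * dist a b / ‖emb a 1‖ ≤ 2 * dist a b / 1 :=
        div_le_div_of_nonneg_left (by positivity) one_pos (norm_emb_one_ge_one a)
    _ = 2 * dist a b := by ring

lemma dist_piP_le' (a b : Vec d) (ha : a ≠ 0) : dist (piP a) (piP b) ≤ 2 * dist a b / ‖a‖ := by
  have h := norm_normalize_sub (emb a 1) (emb b 1) (emb_one_ne_zero a) (emb_one_ne_zero b)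
  rw [piP, piP, dist_eq_norm]
  refine le_trans h ?_
  rw [emb_sub, sub_self]
  have hd : ‖emb (a - b) 0‖ = dist a b := by rw [norm_emb_zero, dist_eq_norm]
  rw [hd]
  exact div_le_div_of_nonneg_left (by positivity) (norm_pos_iff.2 ha) (norm_emb_one_ge a)

/-- distance from projective point to equator point -/
lemma dist_piP_equator {s : Vec d} (hs : ‖s‖ = 1) {ρ : ℝ} (hρ : 0 < ρ) :
    dist (piP (ρ • s)) (emb s 0) ≤ 2 / ρ := by
  have hx : emb (ρ • s) 1 ≠ 0 := emb_one_ne_zero _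
  have hns : ‖emb (ρ • s) 0‖ = ρ := by
    rw [norm_emb_zero, norm_smul, hs, Real.norm_eq_abs, abs_of_pos hρ, mul_one]
  have hy : emb (ρ • s) 0 ≠ 0 := by
    intro h; rw [h, norm_zero] at hns; exact hρ.ne hns
  have key : ‖emb (ρ • s) 0‖⁻¹ • emb (ρ • s) 0 = emb s 0 := by
    rw [hns, emb_smul, smul_smul, inv_mul_cancel₀ hρ.ne', one_smul, mul_zero]
  have h := norm_normalize_sub (emb (ρ • s) 1) (emb (ρ • s) 0) hx hy
  rw [key] at h
  rw [piP, dist_eq_norm]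
  refine le_trans h ?_
  rw [emb_sub, sub_self]
  have h0 : ‖emb (0 : Vec d) (1 - 0 : ℝ)‖ = 1 := by
    have h1 := norm_emb_sq (0 : Vec d) (1 - 0 : ℝ)
    have h2 : ‖(0 : Vec d)‖ = 0 := norm_zero
    nlinarith [norm_nonneg (emb (0 : Vec d) (1 - 0 : ℝ))]
  rw [h0]
  have : ρ ≤ ‖emb (ρ • s) 1‖ := le_trans (by rw [norm_smul, hs, Real.norm_eq_abs, abs_of_pos hρ, mul_one]) (norm_emb_one_ge _)
  calc 2 * 1 / ‖emb (ρ • s) 1‖ ≤ 2 * 1 / ρ := by gcongr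
    _ = 2 / ρ := by ring

lemma dist_emb_zero (a b : Vec d) : dist (emb a 0) (emb b 0) = dist a b := by
  rw [dist_eq_norm, emb_sub, sub_self, norm_emb_zero, dist_eq_norm]

lemma emb_zero_one_eq_piP_zero : (emb (0 : Vec d) 1) = piP 0 := by
  rw [piP]
  have : ‖emb (0 : Vec d) 1‖ = 1 := by
    have h1 := norm_emb_sq (0 : Vec d) (1:ℝ)
    have h2 : ‖(0 : Vec d)‖ = 0 := norm_zero
    nlinarith [norm_nonneg (emb (0 : Vec d) (1:ℝ))]
  rw [this]; simp

end Aux2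
section Aux3
variable {d : ℕ} {Φ : ℝ → Vec d → Vec d}

lemma Phi_smul (hΦ : IsLinearFlow d Φ) (t c : ℝ) (v : Vec d) :
    Φ t (c • v) = c • Φ t v := (hΦ.lin t).map_smul c v

lemma Phi_zero (hΦ : IsLinearFlow d Φ) (t : ℝ) : Φ t 0 = 0 := (hΦ.lin t).map_zero

lemma Phi_ne_zero (hΦ : IsLinearFlow d Φ) (t : ℝ) {v : Vec d} (hv : v ≠ 0) : Φ t v ≠ 0 := by
  intro h
  apply hv
  have := hΦ.comp (-t) t v
  rw [neg_add_cancel, hΦ.init, h, Phi_zero hΦ] at this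
  exact this

lemma norm_Phi_pos (hΦ : IsLinearFlow d Φ) (t : ℝ) {v : Vec d} (hv : v ≠ 0) : 0 < ‖Φ t v‖ :=
  norm_pos_iff.2 (Phi_ne_zero hΦ t hv)

lemma sphFlow_norm (hΦ : IsLinearFlow d Φ) (t : ℝ) {v : Vec d} (hv : v ≠ 0) :
    ‖sphFlow Φ t v‖ = 1 := by
  rw [sphFlow, norm_smul, norm_inv, norm_norm]
  exact inv_mul_cancel₀ (norm_Phi_pos hΦ t hv).ne'

lemma extFlow_emb (t : ℝ) (v : Vec d) (r : ℝ) :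
    extFlow Φ t (emb v r) = emb (Φ t v) r := rfl

lemma poinFlow_piP (hΦ : IsLinearFlow d Φ) (t : ℝ) (v : Vec d) :
    poinFlow Φ t (piP v) = piP (Φ t v) := by
  set c := ‖emb v 1‖⁻¹ with hc
  have hcpos : 0 < c := inv_pos.2 (norm_emb_one_pos v)
  have h1 : piP v = emb (c • v) (c * 1) := by rw [piP, emb_smul]
  have h2 : extFlow Φ t (piP v) = c • emb (Φ t v) 1 := by
    rw [h1, extFlow_emb, Phi_smul hΦ, emb_smul]
  have hc0 : c ≠ 0 := hcpos.ne'
  have hX : ‖emb (Φ t v) 1‖ ≠ 0 := (norm_emb_one_pos (Φ t v)).ne'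
  rw [poinFlow, h2, norm_smul, Real.norm_eq_abs, abs_of_pos hcpos, smul_smul, piP]
  congr 1
  field_simp

lemma poinFlow_equator (hΦ : IsLinearFlow d Φ) (t : ℝ) {u : Vec d} (hu : u ≠ 0) :
    poinFlow Φ t (emb u 0) = emb (sphFlow Φ t u) 0 := by
  rw [poinFlow, extFlow_emb, norm_emb_zero, emb_smul, mul_zero, sphFlow]

lemma poinFlow_pole (hΦ : IsLinearFlow d Φ) (t : ℝ) :
    poinFlow Φ t (emb (0:Vec d) 1) = emb (0:Vec d) 1 := by
  rw [poinFlow, extFlow_emb, Phi_zero hΦ]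
  have h2 : ‖(0 : Vec d)‖ = 0 := norm_zero
  have : ‖emb (0 : Vec d) 1‖ = 1 := by
    have h1 := norm_emb_sq (0 : Vec d) (1:ℝ)
    nlinarith [norm_nonneg (emb (0 : Vec d) (1:ℝ))]
  rw [this]; simp

lemma equator_mem_closedHemi {u : Vec d} (hu : ‖u‖ = 1) : emb u 0 ∈ closedHemi d :=
  ⟨by rw [norm_emb_zero, hu], by rw [show ((WithLp.equiv 2 (Vec d × ℝ)) (emb u 0)).2 = (emb u 0).snd from rfl, emb_snd]⟩

end Aux3
section Aux4
variable {X : Type*} [MetricSpace X] {Ψ : ℝ → X → X} {S S' : Set X} {ε T : ℝ}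

lemma chain_mono (hS : S ⊆ S') {x y : X} (h : ChainIn Ψ S ε T x y) :
    ChainIn Ψ S' ε T x y := by
  obtain ⟨n, u, t, hn, h0, hN, hm, ht, hj⟩ := h
  exact ⟨n, u, t, hn, h0, hN, fun i hi => hS (hm i hi), ht, hj⟩

lemma chain_single {x y : X} {τ : ℝ} (hx : x ∈ S) (hy : y ∈ S) (hτ : T ≤ τ)
    (hd : dist (Ψ τ x) y < ε) : ChainIn Ψ S ε T x y := by
  refine ⟨1, fun i => if i = 0 then x else y, fun _ => τ, le_refl 1, by simp, by simp, ?_, ?_, ?_⟩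
  · intro i _; by_cases h : i = 0 <;> simp [h, hx, hy]
  · intro i _; exact hτ
  · intro i hi
    interval_cases i
    simpa using hd

lemma chain_concat {x y z : X} (h1 : ChainIn Ψ S ε T x y) (h2 : ChainIn Ψ S ε T y z) :
    ChainIn Ψ S ε T x z := by
  obtain ⟨n₁, u₁, t₁, hn₁, h0₁, hN₁, hm₁, ht₁, hj₁⟩ := h1
  obtain ⟨n₂, u₂, t₂, hn₂, h0₂, hN₂, hm₂, ht₂, hj₂⟩ := h2
  refine ⟨n₁ + n₂, fun i => if i < n₁ then u₁ i else u₂ (i - n₁),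
    fun i => if i < n₁ then t₁ i else t₂ (i - n₁), le_trans hn₁ (Nat.le_add_right _ _), ?_, ?_, ?_, ?_, ?_⟩
  · simp only [if_pos (lt_of_lt_of_le Nat.zero_lt_one hn₁)]; exact h0₁
  · have : ¬ (n₁ + n₂ < n₁) := by omega
    simp only [if_neg this, Nat.add_sub_cancel_left]; exact hN₂
  · intro i hi
    by_cases h : i < n₁
    · simp only [if_pos h]; exact hm₁ i h.le
    · simp only [if_neg h]; exact hm₂ (i - n₁) (by omega)
  · intro i hi
    by_cases h : i < n₁
    · simp only [if_pos h]; exact ht₁ i h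
    · simp only [if_neg h]; exact ht₂ (i - n₁) (by omega)
  · have hu : ∀ j ≤ n₁, (if j < n₁ then u₁ j else u₂ (j - n₁)) = u₁ j := by
      intro j hj
      by_cases h : j < n₁
      · simp [h]
      · have hjn : j = n₁ := by omega
        simp [h, hjn, h0₂, hN₁]
    intro i hi
    by_cases h : i < n₁
    · simp only [if_pos h]
      rw [hu (i+1) (by omega)]
      exact hj₁ i h
    · have h' : ¬ (i + 1 < n₁) := by omega
      simp only [if_neg h, if_neg h']
      have : i + 1 - n₁ = (i - n₁) + 1 := by omega
      rw [this]
      exact hj₂ (i - n₁) (by omega)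

end Aux4
section Aux5
variable {d : ℕ} {Φ : ℝ → Vec d → Vec d}

def liftScale (Φ : ℝ → Vec d → Vec d) (u : ℕ → Vec d) (t : ℕ → ℝ) (ρ₀ : ℝ) (i : ℕ) : ℝ :=
  ρ₀ * ∏ j ∈ Finset.range i, ‖Φ (t j) (u j)‖

lemma liftScale_zero (u : ℕ → Vec d) (t : ℕ → ℝ) (ρ₀ : ℝ) : liftScale Φ u t ρ₀ 0 = ρ₀ := by
  simp [liftScale]

lemma liftScale_succ (u : ℕ → Vec d) (t : ℕ → ℝ) (ρ₀ : ℝ) (i : ℕ) :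
    liftScale Φ u t ρ₀ (i+1) = liftScale Φ u t ρ₀ i * ‖Φ (t i) (u i)‖ := by
  rw [liftScale, liftScale, Finset.prod_range_succ, mul_assoc]

lemma liftScale_pos (hΦ : IsLinearFlow d Φ) {u : ℕ → Vec d} {t : ℕ → ℝ} {ρ₀ : ℝ}
    (hρ₀ : 0 < ρ₀) {n : ℕ} (hsph : ∀ i ≤ n, u i ∈ sphere1 d) {i : ℕ} (hi : i ≤ n) :
    0 < liftScale Φ u t ρ₀ i := by
  apply mul_pos hρ₀
  apply Finset.prod_pos
  intro j hj
  rw [Finset.mem_range] at hj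
  have h1 : ‖u j‖ = 1 := hsph j (by omega)
  exact norm_Phi_pos hΦ (t j) (fun h => by simp [h] at h1)

lemma unit_ne_zero {v : Vec d} (hv : ‖v‖ = 1) : v ≠ 0 := fun h => by simp [h] at hv

lemma poinFlow_piP_smul (hΦ : IsLinearFlow d Φ) (τ : ℝ) {w : Vec d} (hw : w ≠ 0)
    (ρ : ℝ) :
    poinFlow Φ τ (piP (ρ • w)) = piP ((ρ * ‖Φ τ w‖) • sphFlow Φ τ w) := by
  rw [poinFlow_piP hΦ, Phi_smul hΦ, sphFlow, smul_smul, mul_assoc,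
    mul_inv_cancel₀ (norm_Phi_pos hΦ τ hw).ne', mul_one]

lemma dist_piP_smul {s : Vec d} (w : Vec d) (hs : ‖s‖ = 1) {ρ : ℝ} (hρ : 0 < ρ) :
    dist (piP (ρ • s)) (piP (ρ • w)) ≤ 2 * dist s w := by
  have hne : ρ • s ≠ 0 := by
    intro h
    have := norm_smul ρ s
    rw [h, norm_zero, hs, mul_one, Real.norm_eq_abs] at this
    exact hρ.ne' (by rw [abs_of_pos hρ] at this; exact this.symm)
  have h := dist_piP_le' (ρ • s) (ρ • w) hne
  have h2 : dist (ρ • s) (ρ • w) = ρ * dist s w := by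
    rw [dist_smul₀, Real.norm_eq_abs, abs_of_pos hρ]
  have h3 : ‖ρ • s‖ = ρ := by
    rw [norm_smul, hs, mul_one, Real.norm_eq_abs, abs_of_pos hρ]
  rw [h2, h3] at h
  refine le_trans h (le_of_eq ?_)
  field_simp

end Aux5
section Aux6
variable {d : ℕ} {Φ : ℝ → Vec d → Vec d} {n : ℕ} {u : ℕ → Vec d} {t : ℕ → ℝ} {T δ ε : ℝ}

lemma liftA (hΦ : IsLinearFlow d Φ) (hn : 1 ≤ n)
    (hsph : ∀ i ≤ n, u i ∈ sphere1 d) (ht : ∀ i < n, T ≤ t i)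
    (hjump : ∀ i < n, dist (sphFlow Φ (t i) (u i)) (u (i+1)) < δ)
    {ρ₀ : ℝ} (hρ₀ : 0 < ρ₀) (hε : 2 * δ ≤ ε) :
    ChainIn (poinFlow Φ) (openHemi d) ε T
      (piP (ρ₀ • u 0)) (piP (liftScale Φ u t ρ₀ n • u n)) := by
  refine ⟨n, fun i => piP (liftScale Φ u t ρ₀ i • u i), t, hn,
    by simp only [liftScale_zero], rfl, fun i _ => piP_mem_openHemi _, ht, ?_⟩
  intro i hi
  have hui : ‖u i‖ = 1 := hsph i hi.le
  have hne : u i ≠ 0 := unit_ne_zero hui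
  rw [poinFlow_piP_smul hΦ (t i) hne, ← liftScale_succ]
  have hpos : 0 < liftScale Φ u t ρ₀ (i+1) := liftScale_pos hΦ hρ₀ hsph (by omega)
  have hb := dist_piP_smul (u (i+1)) (sphFlow_norm hΦ (t i) hne) hpos
  have hj := hjump i hi
  calc dist (piP (liftScale Φ u t ρ₀ (i+1) • sphFlow Φ (t i) (u i)))
        (piP (liftScale Φ u t ρ₀ (i+1) • u (i+1)))
      ≤ 2 * dist (sphFlow Φ (t i) (u i)) (u (i+1)) := hb
    _ < 2 * δ := by linarith
    _ ≤ ε := hε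

lemma liftStartEq (hΦ : IsLinearFlow d Φ) (hn : 1 ≤ n)
    (hsph : ∀ i ≤ n, u i ∈ sphere1 d) (ht : ∀ i < n, T ≤ t i)
    (hjump : ∀ i < n, dist (sphFlow Φ (t i) (u i)) (u (i+1)) < δ)
    {ρ₀ : ℝ} (hρ₀ : 0 < ρ₀)
    (hε : 2 / (ρ₀ * ‖Φ (t 0) (u 0)‖) + 2 * δ ≤ ε) :
    ChainIn (poinFlow Φ) (closedHemi d) ε T
      (emb (u 0) 0) (piP (liftScale Φ u t ρ₀ n • u n)) := by
  have hδ : 0 ≤ δ := le_of_lt (lt_of_le_of_lt dist_nonneg (hjump 0 hn))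
  have hρ1 : 0 < ρ₀ * ‖Φ (t 0) (u 0)‖ :=
    mul_pos hρ₀ (norm_Phi_pos hΦ _ (unit_ne_zero (hsph 0 (by omega))))
  have hεm : 2 * δ ≤ ε := by
    have : 0 < 2 / (ρ₀ * ‖Φ (t 0) (u 0)‖) := by positivity
    linarith
  refine ⟨n, fun i => if i = 0 then emb (u 0) 0 else piP (liftScale Φ u t ρ₀ i • u i), t, hn,
    by simp only [reduceIte], by simp only [if_neg (by omega : ¬ n = 0)], ?_, ht, ?_⟩
  · intro i _
    by_cases h : i = 0
    · simp only [if_pos h, h]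
      exact equator_mem_closedHemi (hsph 0 (by omega))
    · simp only [if_neg h]
      exact piP_mem_closedHemi _
  · intro i hi
    by_cases h : i = 0
    · subst h
      simp only [reduceIte, if_neg (by omega : ¬ (0+1 = 0))]
      have hne : u 0 ≠ 0 := unit_ne_zero (hsph 0 (by omega))
      rw [poinFlow_equator hΦ (t 0) hne]
      set s := sphFlow Φ (t 0) (u 0) with hs
      have hsn : ‖s‖ = 1 := sphFlow_norm hΦ (t 0) hne
      have hρ1' : liftScale Φ u t ρ₀ 1 = ρ₀ * ‖Φ (t 0) (u 0)‖ := by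
        rw [liftScale_succ, liftScale_zero]
      have h1 : dist (emb s 0) (piP (liftScale Φ u t ρ₀ 1 • s)) ≤ 2 / (ρ₀ * ‖Φ (t 0) (u 0)‖) := by
        rw [dist_comm, ← hρ1']
        exact dist_piP_equator hsn (by rw [hρ1']; exact hρ1)
      have h2 : dist (piP (liftScale Φ u t ρ₀ 1 • s)) (piP (liftScale Φ u t ρ₀ 1 • u 1)) ≤
          2 * dist s (u 1) := dist_piP_smul (u 1) hsn (by rw [hρ1']; exact hρ1)
      have hj := hjump 0 hn
      calc dist (emb s 0) (piP (liftScale Φ u t ρ₀ (0+1) • u (0+1)))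
          ≤ dist (emb s 0) (piP (liftScale Φ u t ρ₀ 1 • s)) +
            dist (piP (liftScale Φ u t ρ₀ 1 • s)) (piP (liftScale Φ u t ρ₀ 1 • u 1)) := dist_triangle _ _ _
        _ < 2 / (ρ₀ * ‖Φ (t 0) (u 0)‖) + 2 * δ := by
            have := dist_nonneg (x := s) (y := u 1)
            rw [← hs] at hj
            linarith
        _ ≤ ε := hε
    · simp only [if_neg h, if_neg (by omega : ¬ (i+1 = 0))]
      have hui : ‖u i‖ = 1 := hsph i hi.le
      have hne : u i ≠ 0 := unit_ne_zero hui
      rw [poinFlow_piP_smul hΦ (t i) hne, ← liftScale_succ]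
      have hpos : 0 < liftScale Φ u t ρ₀ (i+1) := liftScale_pos hΦ hρ₀ hsph (by omega)
      have hb := dist_piP_smul (u (i+1)) (sphFlow_norm hΦ (t i) hne) hpos
      have hj := hjump i hi
      calc dist (piP (liftScale Φ u t ρ₀ (i+1) • sphFlow Φ (t i) (u i)))
            (piP (liftScale Φ u t ρ₀ (i+1) • u (i+1)))
          ≤ 2 * dist (sphFlow Φ (t i) (u i)) (u (i+1)) := hb
        _ < 2 * δ := by linarith
        _ ≤ ε := hεm

lemma liftEndEq (hΦ : IsLinearFlow d Φ) (hn : 1 ≤ n)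
    (hsph : ∀ i ≤ n, u i ∈ sphere1 d) (ht : ∀ i < n, T ≤ t i)
    (hjump : ∀ i < n, dist (sphFlow Φ (t i) (u i)) (u (i+1)) < δ)
    {ρ₀ : ℝ} (hρ₀ : 0 < ρ₀) (hεm : 2 * δ ≤ ε)
    (hεn : 2 / liftScale Φ u t ρ₀ n + δ ≤ ε) :
    ChainIn (poinFlow Φ) (closedHemi d) ε T
      (piP (ρ₀ • u 0)) (emb (u n) 0) := by
  refine ⟨n, fun i => if i = n then emb (u n) 0 else piP (liftScale Φ u t ρ₀ i • u i), t, hn,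
    by simp only [if_neg (by omega : ¬ (0:ℕ) = n), liftScale_zero], by simp only [reduceIte], ?_, ht, ?_⟩
  · intro i _
    by_cases h : i = n
    · simp only [if_pos h]
      exact equator_mem_closedHemi (hsph n (le_refl n))
    · simp only [if_neg h]
      exact piP_mem_closedHemi _
  · intro i hi
    have hui : ‖u i‖ = 1 := hsph i hi.le
    have hne : u i ≠ 0 := unit_ne_zero hui
    have hpos : 0 < liftScale Φ u t ρ₀ (i+1) := liftScale_pos hΦ hρ₀ hsph (by omega)
    have hsn : ‖sphFlow Φ (t i) (u i)‖ = 1 := sphFlow_norm hΦ (t i) hne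
    have hj := hjump i hi
    simp only [if_neg (by omega : ¬ i = n)]
    rw [poinFlow_piP_smul hΦ (t i) hne, ← liftScale_succ]
    by_cases h : i + 1 = n
    · simp only [if_pos h]
      have h1 : dist (piP (liftScale Φ u t ρ₀ (i+1) • sphFlow Φ (t i) (u i)))
          (emb (sphFlow Φ (t i) (u i)) 0) ≤ 2 / liftScale Φ u t ρ₀ (i+1) :=
        dist_piP_equator hsn hpos
      have h2 : dist (emb (sphFlow Φ (t i) (u i)) 0) (emb (u n) 0)
          = dist (sphFlow Φ (t i) (u i)) (u n) := dist_emb_zero _ _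
      calc dist (piP (liftScale Φ u t ρ₀ (i+1) • sphFlow Φ (t i) (u i))) (emb (u n) 0)
          ≤ dist (piP (liftScale Φ u t ρ₀ (i+1) • sphFlow Φ (t i) (u i)))
              (emb (sphFlow Φ (t i) (u i)) 0) + dist (emb (sphFlow Φ (t i) (u i)) 0) (emb (u n) 0) :=
            dist_triangle _ _ _
        _ < 2 / liftScale Φ u t ρ₀ (i+1) + δ := by
            rw [h2]
            have : dist (sphFlow Φ (t i) (u i)) (u n) < δ := by rw [← h]; exact hj
            linarith
        _ = 2 / liftScale Φ u t ρ₀ n + δ := by rw [h]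
        _ ≤ ε := hεn
    · simp only [if_neg h]
      have hb := dist_piP_smul (u (i+1)) hsn hpos
      calc dist (piP (liftScale Φ u t ρ₀ (i+1) • sphFlow Φ (t i) (u i)))
            (piP (liftScale Φ u t ρ₀ (i+1) • u (i+1)))
          ≤ 2 * dist (sphFlow Φ (t i) (u i)) (u (i+1)) := hb
        _ < 2 * δ := by linarith
        _ ≤ ε := hεm

end Aux6
section Aux7
variable {d : ℕ} {Φ : ℝ → Vec d → Vec d} {M : Set (Vec d)} {v₀ : Vec d}

lemma hl_chain (hl : ChainTransOn (poinFlow Φ) (openHemi d)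
      (piP '' {x | ∃ α : ℝ, 0 < α ∧ x = α • v₀}))
    {ρ σ ε T : ℝ} (hρ : 0 < ρ) (hσ : 0 < σ) (hε : 0 < ε) (hT : 0 < T) :
    ChainIn (poinFlow Φ) (openHemi d) ε T (piP (ρ • v₀)) (piP (σ • v₀)) :=
  hl _ ⟨ρ • v₀, ⟨ρ, hρ, rfl⟩, rfl⟩ _ ⟨σ • v₀, ⟨σ, hσ, rfl⟩, rfl⟩ ε T hε hT

variable (hΦ : IsLinearFlow d Φ) (hMs : M ⊆ sphere1 d)
  (hMt : ChainTransOn (sphFlow Φ) (sphere1 d) M) (hv₀ : v₀ ∈ M)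
  (hl : ChainTransOn (poinFlow Φ) (openHemi d)
      (piP '' {x | ∃ α : ℝ, 0 < α ∧ x = α • v₀}))

include hΦ hMt hv₀ hl

lemma reachA {v : Vec d} (hv : v ∈ M) {α ε T : ℝ} (hα : 0 < α) (hε : 0 < ε) (hT : 0 < T) :
    ChainIn (poinFlow Φ) (closedHemi d) ε T (piP (α • v)) (piP v₀) := by
  obtain ⟨n, u, t, hn, h0, hN, hm, ht, hj⟩ := hMt v hv v₀ hv₀ (ε/3) T (by positivity) hT
  have hc1 : ChainIn (poinFlow Φ) (openHemi d) ε T (piP (α • u 0))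
      (piP (liftScale Φ u t α n • u n)) :=
    liftA hΦ hn hm ht hj hα (by linarith)
  rw [h0, hN] at hc1
  have hρn : 0 < liftScale Φ u t α n := liftScale_pos hΦ hα hm (le_refl n)
  have hc2 : ChainIn (poinFlow Φ) (openHemi d) ε T (piP (liftScale Φ u t α n • v₀))
      (piP ((1:ℝ) • v₀)) := hl_chain hl hρn one_pos hε hT
  rw [one_smul] at hc2
  exact chain_mono openHemi_subset_closed (chain_concat hc1 hc2)

lemma reachB {v : Vec d} (hv : v ∈ M) {α ε T : ℝ} (hα : 0 < α) (hε : 0 < ε) (hT : 0 < T) :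
    ChainIn (poinFlow Φ) (closedHemi d) ε T (piP v₀) (piP (α • v)) := by
  obtain ⟨n, u, t, hn, h0, hN, hm, ht, hj⟩ := hMt v₀ hv₀ v hv (ε/3) T (by positivity) hT
  have hP : 0 < liftScale Φ u t 1 n := liftScale_pos hΦ one_pos hm (le_refl n)
  set P := ∏ j ∈ Finset.range n, ‖Φ (t j) (u j)‖ with hPdef
  have hP' : 0 < P := by rw [show P = liftScale Φ u t 1 n by rw [liftScale, one_mul]]; exact hP
  set ρ₀ := α / P with hρ₀def
  have hρ₀ : 0 < ρ₀ := div_pos hα hP'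
  have hc1 : ChainIn (poinFlow Φ) (openHemi d) ε T (piP (ρ₀ • u 0))
      (piP (liftScale Φ u t ρ₀ n • u n)) :=
    liftA hΦ hn hm ht hj hρ₀ (by linarith)
  rw [h0, hN] at hc1
  have hend : liftScale Φ u t ρ₀ n = α := by
    rw [liftScale, ← hPdef, hρ₀def, div_mul_cancel₀ _ hP'.ne']
  rw [hend] at hc1
  have hc2 : ChainIn (poinFlow Φ) (openHemi d) ε T (piP ((1:ℝ) • v₀))
      (piP (ρ₀ • v₀)) := hl_chain hl one_pos hρ₀ hε hT
  rw [one_smul] at hc2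
  exact chain_mono openHemi_subset_closed (chain_concat hc2 hc1)

include hMs in
lemma reachC1 {ε T : ℝ} (hε : 0 < ε) (hT : 0 < T) :
    ChainIn (poinFlow Φ) (closedHemi d) ε T (emb (0 : Vec d) 1) (piP v₀) := by
  have hv₀1 : ‖v₀‖ = 1 := hMs hv₀
  set α := ε/5 with hα
  have hαpos : (0:ℝ) < α := by positivity
  have hstep : ChainIn (poinFlow Φ) (closedHemi d) ε T (emb (0 : Vec d) 1) (piP (α • v₀)) := by
    apply chain_single
    · rw [emb_zero_one_eq_piP_zero]; exact piP_mem_closedHemi _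
    · exact piP_mem_closedHemi _
    · exact le_refl T
    · rw [poinFlow_pole hΦ, emb_zero_one_eq_piP_zero]
      refine lt_of_le_of_lt (dist_piP_le 0 (α • v₀)) ?_
      have : dist (0 : Vec d) (α • v₀) = α := by
        rw [dist_comm, dist_zero_right, norm_smul, hv₀1, mul_one, Real.norm_eq_abs,
          abs_of_pos hαpos]
      rw [this]
      linarith
  exact chain_concat hstep (reachA hΦ hMt hv₀ hl hv₀ hαpos hε hT)

include hMs in
lemma reachC2 {ε T : ℝ} (hε : 0 < ε) (hT : 0 < T) :
    ChainIn (poinFlow Φ) (closedHemi d) ε T (piP v₀) (emb (0 : Vec d) 1) := by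
  have hv₀1 : ‖v₀‖ = 1 := hMs hv₀
  set w := Φ T v₀ with hw
  set α := ε / (2 * (‖w‖ + 1)) with hα
  have hαpos : (0:ℝ) < α := by positivity
  have hstep : ChainIn (poinFlow Φ) (closedHemi d) ε T (piP (α • v₀)) (emb (0 : Vec d) 1) := by
    apply chain_single
    · exact piP_mem_closedHemi _
    · rw [emb_zero_one_eq_piP_zero]; exact piP_mem_closedHemi _
    · exact le_refl T
    · rw [poinFlow_piP hΦ, emb_zero_one_eq_piP_zero, Phi_smul hΦ, ← hw]
      refine lt_of_le_of_lt (dist_piP_le (α • w) 0) ?_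
      have : dist (α • w) (0 : Vec d) = α * ‖w‖ := by
        rw [dist_zero_right, norm_smul, Real.norm_eq_abs, abs_of_pos hαpos]
      rw [this]
      have h1 : 0 ≤ ‖w‖ := norm_nonneg w
      have h2 : α * (2 * (‖w‖ + 1)) = ε := by
        rw [hα]; field_simp
      nlinarith
  exact chain_concat (reachB hΦ hMt hv₀ hl hv₀ hαpos hε hT) hstep

lemma reachD1 {v : Vec d} (hv : v ∈ M) {ε T : ℝ} (hε : 0 < ε) (hT : 0 < T) :
    ChainIn (poinFlow Φ) (closedHemi d) ε T (emb v 0) (piP v₀) := by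
  obtain ⟨n, u, t, hn, h0, hN, hm, ht, hj⟩ := hMt v hv v₀ hv₀ (ε/4) T (by positivity) hT
  have hu0 : u 0 ≠ 0 := unit_ne_zero (hm 0 (by omega))
  have hw : 0 < ‖Φ (t 0) (u 0)‖ := norm_Phi_pos hΦ _ hu0
  set ρ₀ := 8 / (ε * ‖Φ (t 0) (u 0)‖) with hρ₀def
  have hρ₀ : 0 < ρ₀ := by positivity
  have hεcond : 2 / (ρ₀ * ‖Φ (t 0) (u 0)‖) + 2 * (ε/4) ≤ ε := by
    have : ρ₀ * ‖Φ (t 0) (u 0)‖ = 8 / ε := by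
      rw [hρ₀def]; field_simp
    rw [this]
    rw [div_div_eq_mul_div]
    have : 2 * ε / 8 = ε / 4 := by ring
    rw [this]
    linarith
  have hc1 : ChainIn (poinFlow Φ) (closedHemi d) ε T (emb (u 0) 0)
      (piP (liftScale Φ u t ρ₀ n • u n)) :=
    liftStartEq hΦ hn hm ht hj hρ₀ hεcond
  rw [h0, hN] at hc1
  have hρn : 0 < liftScale Φ u t ρ₀ n := liftScale_pos hΦ hρ₀ hm (le_refl n)
  have hc2 : ChainIn (poinFlow Φ) (openHemi d) ε T (piP (liftScale Φ u t ρ₀ n • v₀))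
      (piP ((1:ℝ) • v₀)) := hl_chain hl hρn one_pos hε hT
  rw [one_smul] at hc2
  exact chain_concat hc1 (chain_mono openHemi_subset_closed hc2)

lemma reachD2 {v : Vec d} (hv : v ∈ M) {ε T : ℝ} (hε : 0 < ε) (hT : 0 < T) :
    ChainIn (poinFlow Φ) (closedHemi d) ε T (piP v₀) (emb v 0) := by
  obtain ⟨n, u, t, hn, h0, hN, hm, ht, hj⟩ := hMt v₀ hv₀ v hv (ε/4) T (by positivity) hT
  have hP : 0 < liftScale Φ u t 1 n := liftScale_pos hΦ one_pos hm (le_refl n)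
  set P := ∏ j ∈ Finset.range n, ‖Φ (t j) (u j)‖ with hPdef
  have hP' : 0 < P := by rw [show P = liftScale Φ u t 1 n by rw [liftScale, one_mul]]; exact hP
  set ρ₀ := (8/ε) / P with hρ₀def
  have hρ₀ : 0 < ρ₀ := by positivity
  have hend : liftScale Φ u t ρ₀ n = 8/ε := by
    rw [liftScale, ← hPdef, hρ₀def, div_mul_cancel₀ _ hP'.ne']
  have hεn : 2 / liftScale Φ u t ρ₀ n + ε/4 ≤ ε := by
    rw [hend, div_div_eq_mul_div]
    have : 2 * ε / 8 = ε / 4 := by ring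
    rw [this]; linarith
  have hc1 : ChainIn (poinFlow Φ) (closedHemi d) ε T (piP (ρ₀ • u 0)) (emb (u n) 0) :=
    liftEndEq hΦ hn hm ht hj hρ₀ (by linarith) hεn
  rw [h0, hN] at hc1
  have hc2 : ChainIn (poinFlow Φ) (openHemi d) ε T (piP ((1:ℝ) • v₀))
      (piP (ρ₀ • v₀)) := hl_chain hl one_pos hρ₀ hε hT
  rw [one_smul] at hc2
  exact chain_concat (chain_mono openHemi_subset_closed hc2) hc1

end Aux7
section Aux8
variable {d : ℕ}

def gmap (d : ℕ) : Vec d × ℝ → PVec d :=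
  fun q => emb (q.2 • q.1) (Real.sqrt (1 - q.2^2))

lemma gmap_cont : Continuous (gmap d) := by
  apply Continuous.comp (WithLp.prod_continuous_toLp 2 (Vec d) ℝ)
  exact (continuous_snd.smul continuous_fst).prodMk
    (Real.continuous_sqrt.comp (continuous_const.sub (continuous_snd.pow 2)))

lemma sqrt_inv_sq {s : ℝ} (hs : 0 < s) : Real.sqrt (1 / s^2) = 1 / s := by
  rw [show (1:ℝ) / s^2 = (1/s)^2 by rw [div_pow, one_pow], Real.sqrt_sq (by positivity)]

lemma piP_smul_unit {v : Vec d} (hv : ‖v‖ = 1) {α : ℝ} (hα : 0 < α) :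
    piP (α • v) = gmap d (v, α / Real.sqrt (α^2 + 1)) := by
  set s := Real.sqrt (α^2 + 1) with hsdef
  have hs2 : s^2 = α^2 + 1 := Real.sq_sqrt (by positivity)
  have hs : 0 < s := Real.sqrt_pos.2 (by positivity)
  have hnorm : ‖emb (α • v) 1‖ = s := by
    have h1 : ‖emb (α • v) 1‖^2 = α^2 + 1 := by
      rw [norm_emb_sq, norm_smul, hv, mul_one, Real.norm_eq_abs, sq_abs]; norm_num
    rw [← Real.sqrt_sq (norm_nonneg _), h1]
  rw [piP, hnorm, emb_smul, gmap]
  have e1 : s⁻¹ • (α • v) = (α / s) • v := by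
    rw [smul_smul, inv_mul_eq_div]
  have e2 : s⁻¹ * 1 = Real.sqrt (1 - (α/s)^2) := by
    have : 1 - (α/s)^2 = 1 / s^2 := by
      rw [div_pow, hs2]; field_simp; ring
    rw [this, sqrt_inv_sq hs, mul_one, one_div]
  rw [e1, e2]

lemma gmap_zero (v : Vec d) : gmap d (v, 0) = emb (0 : Vec d) 1 := by
  rw [gmap]
  norm_num

lemma gmap_one (v : Vec d) : gmap d (v, 1) = emb v 0 := by
  rw [gmap]
  norm_num

lemma closure_cases {M : Set (Vec d)} (hMs : M ⊆ sphere1 d) (hMc : IsCompact M)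
    {x : PVec d} (hx : x ∈ closure (piP '' {x | ∃ α : ℝ, 0 < α ∧ ∃ v ∈ M, x = α • v})) :
    x = emb (0 : Vec d) 1 ∨ (∃ v ∈ M, x = emb v 0) ∨
      (∃ v ∈ M, ∃ α : ℝ, 0 < α ∧ x = piP (α • v)) := by
  have hsub : closure (piP '' {x | ∃ α : ℝ, 0 < α ∧ ∃ v ∈ M, x = α • v}) ⊆
      gmap d '' (M ×ˢ Set.Icc (0:ℝ) 1) := by
    apply closure_minimal
    · rintro z ⟨w, ⟨α, hα, v, hv, rfl⟩, rfl⟩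
      have hv1 : ‖v‖ = 1 := hMs hv
      refine ⟨(v, α / Real.sqrt (α^2 + 1)), ⟨hv, ?_, ?_⟩, (piP_smul_unit hv1 hα).symm⟩
      · positivity
      · rw [div_le_one (Real.sqrt_pos.2 (by positivity))]
        rw [show α = Real.sqrt (α^2) by rw [Real.sqrt_sq hα.le]]
        apply Real.sqrt_le_sqrt
        rw [Real.sq_sqrt (by positivity)]
        linarith
    · exact ((hMc.prod isCompact_Icc).image gmap_cont).isClosed
  obtain ⟨⟨v, β⟩, ⟨hv, hβ0, hβ1⟩, rfl⟩ := hsub hx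
  have hv' : v ∈ M := hv
  have hβ0' : (0:ℝ) ≤ β := hβ0
  have hβ1' : β ≤ 1 := hβ1
  clear hv hβ0 hβ1
  rcases eq_or_lt_of_le hβ0' with h0 | h0
  · left; rw [show gmap d (v, β) = gmap d (v, 0) by rw [← h0], gmap_zero]
  rcases eq_or_lt_of_le hβ1' with h1 | h1
  · right; left; exact ⟨v, hv', by rw [show gmap d (v, β) = gmap d (v, 1) by rw [h1], gmap_one]⟩
  right; right
  refine ⟨v, hv', β / Real.sqrt (1 - β^2), ?_, ?_⟩
  · have : (0:ℝ) < 1 - β^2 := by nlinarith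
    positivity
  · have hv1 : ‖v‖ = 1 := hMs hv'
    have hb2 : (0:ℝ) < 1 - β^2 := by nlinarith
    set s' := Real.sqrt (1 - β^2) with hs'def
    have hs' : 0 < s' := Real.sqrt_pos.2 hb2
    have hs'2 : s'^2 = 1 - β^2 := Real.sq_sqrt hb2.le
    set α := β / s' with hαdef
    have hα : 0 < α := div_pos h0 hs'
    rw [piP_smul_unit hv1 hα]
    congr 2
    have e1 : α^2 + 1 = 1 / s'^2 := by
      rw [hαdef, div_pow, hs'2]
      field_simp
      ring
    rw [e1, sqrt_inv_sq hs', hαdef]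
    field_simp

end Aux8
theorem stmt10 {d : ℕ} (Φ : ℝ → Vec d → Vec d) (hΦ : IsLinearFlow d Φ)
    (M : Set (Vec d)) (hMs : M ⊆ sphere1 d) (hMc : IsCompact M)
    (hMt : ChainTransOn (sphFlow Φ) (sphere1 d) M)
    (v₀ : Vec d) (hv₀ : v₀ ∈ M)
    (hl : ChainTransOn (poinFlow Φ) (openHemi d)
      (piP '' {x | ∃ α : ℝ, 0 < α ∧ x = α • v₀})) :
    ChainTransOn (poinFlow Φ) (closedHemi d)
      (closure (piP '' {x | ∃ α : ℝ, 0 < α ∧ ∃ v ∈ M, x = α • v})) := by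
  intro x hx y hy ε T hε hT
  have hx' := closure_cases hMs hMc hx
  have hy' := closure_cases hMs hMc hy
  have hchain1 : ChainIn (poinFlow Φ) (closedHemi d) ε T x (piP v₀) := by
    rcases hx' with h | ⟨v, hv, h⟩ | ⟨v, hv, α, hα, h⟩
    · rw [h]; exact reachC1 hΦ hMs hMt hv₀ hl hε hT
    · rw [h]; exact reachD1 hΦ hMt hv₀ hl hv hε hT
    · rw [h]; exact reachA hΦ hMt hv₀ hl hv hα hε hT
  have hchain2 : ChainIn (poinFlow Φ) (closedHemi d) ε T (piP v₀) y := by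
    rcases hy' with h | ⟨v, hv, h⟩ | ⟨v, hv, α, hα, h⟩
    · rw [h]; exact reachC2 hΦ hMs hMt hv₀ hl hε hT
    · rw [h]; exact reachD2 hΦ hMt hv₀ hl hv hε hT
    · rw [h]; exact reachB hΦ hMt hv₀ hl hv hα hε hT
  exact chain_concat hchain1 hchain2
end
end

section
/- For the matrix A = [[0,1],[0,0]] acting on ℝ², the induced flow SΦ(t,v) = e^{tA}v/‖e^{tA}v‖ on the unit circle S¹ is chain recurrent, i.e., S¹ is a single chain transitive set for SΦ. -/
open Metric Finset

noncomputable section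

lemma chain_single_s18 {X : Type*} [MetricSpace X] {Φ : ℝ → X → X} {S : Set X}
    {ε T : ℝ} {x y : X} (hx : x ∈ S) (hy : y ∈ S) {t : ℝ} (ht : T ≤ t)
    (h : dist (Φ t x) y < ε) : ChainIn Φ S ε T x y := by
  refine ⟨1, fun i => if i = 0 then x else y, fun _ => t, le_refl 1, rfl, rfl, ?_, ?_, ?_⟩
  · intro i _; by_cases h : i = 0 <;> simp [h, hx, hy]
  · intro i _; exact ht
  · intro i hi
    interval_cases i
    simpa using h

lemma chain_comp {X : Type*} [MetricSpace X] {Φ : ℝ → X → X} {S : Set X}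
    {ε T : ℝ} {x y z : X} (h1 : ChainIn Φ S ε T x y) (h2 : ChainIn Φ S ε T y z) :
    ChainIn Φ S ε T x z := by
  obtain ⟨n, u, t, hn, hu0, hun, huS, htT, hd⟩ := h1
  obtain ⟨m, v, s, hm, hv0, hvm, hvS, hsT, he⟩ := h2
  refine ⟨n + m, fun i => if i < n then u i else v (i - n),
    fun i => if i < n then t i else s (i - n), by omega, ?_, ?_, ?_, ?_, ?_⟩
  · simp [Nat.lt_of_lt_of_le Nat.zero_lt_one hn, hu0]
  · have : ¬ (n + m < n) := by omega
    simp [this, hvm]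
  · intro i hi
    by_cases h : i < n
    · simp [h]; exact huS i (le_of_lt h)
    · simp [h]; exact hvS (i - n) (by omega)
  · intro i hi
    by_cases h : i < n
    · simp [h]; exact htT i h
    · simp [h]; exact hsT (i - n) (by omega)
  · intro i hi
    by_cases h : i < n
    · simp only [h, if_pos]
      by_cases h' : i + 1 < n
      · simp only [h', if_pos]; exact hd i h
      · have hv : v (i + 1 - n) = u (i + 1) := by
          rw [show i + 1 - n = 0 by omega, hv0, ← hun, show n = i + 1 by omega]
        rw [if_neg h', hv]
        exact hd i h
    · have h' : ¬ (i + 1 < n) := by omega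
      simp only [h, h', if_neg]
      have : i + 1 - n = (i - n) + 1 := by omega
      rw [this]
      exact he (i - n) (by omega)

def V (a b : ℝ) : Vec 2 := WithLp.toLp 2 ![a, b]
@[simp] lemma V_zero' (a b : ℝ) : V a b 0 = a := rfl
@[simp] lemma V_one' (a b : ℝ) : V a b 1 = b := rfl
lemma V_eta (x : Vec 2) : V (x 0) (x 1) = x := by ext i; fin_cases i <;> rfl
lemma norm_V (a b : ℝ) : ‖V a b‖ = Real.sqrt (a ^ 2 + b ^ 2) := by
  rw [EuclideanSpace.norm_eq, Fin.sum_univ_two]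
  simp [Real.norm_eq_abs, sq_abs]
lemma dist_V (a b c d : ℝ) :
    dist (V a b) (V c d) = Real.sqrt ((a - c) ^ 2 + (b - d) ^ 2) := by
  rw [EuclideanSpace.dist_eq, Fin.sum_univ_two]
  simp [Real.dist_eq, sq_abs]
lemma smul_V (c a b : ℝ) : c • V a b = V (c * a) (c * b) := by
  ext i; fin_cases i <;> simp [V]
lemma neg_V (a b : ℝ) : -V a b = V (-a) (-b) := by
  ext i; fin_cases i <;> simp [V]

open NormedSpace in
theorem exp_sq (B : Matrix (Fin 2) (Fin 2) ℝ) (h : B * B = 0) : exp B = 1 + B := by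
  have h1 : exp B = ∑' n : ℕ, (n.factorial⁻¹ : ℝ) • B ^ n := by rw [exp_eq_tsum ℝ]
  rw [h1]
  have hz : ∀ n, 2 ≤ n → B ^ n = 0 := by
    intro n hn
    obtain ⟨k, rfl⟩ := Nat.exists_eq_add_of_le hn
    rw [pow_add, pow_two, h, zero_mul]
  rw [tsum_eq_sum (s := {0, 1}) (by
    intro n hn
    simp only [Finset.mem_insert, Finset.mem_singleton] at hn
    push_neg at hn
    rw [hz n (by omega), smul_zero])]
  norm_num

def Phi : ℝ → Vec 2 → Vec 2 := matFlow 2 !![0, 1; 0, 0]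
def SF : ℝ → Vec 2 → Vec 2 := sphFlow Phi

theorem flow_eq (t : ℝ) (x : Vec 2) : Phi t x = V (x 0 + t * x 1) (x 1) := by
  have h : t • (!![0, 1; 0, 0] : Matrix (Fin 2) (Fin 2) ℝ) = !![0, t; 0, 0] := by
    ext i j; fin_cases i <;> fin_cases j <;> simp
  have h2 : (!![0, t; 0, 0] : Matrix (Fin 2) (Fin 2) ℝ) * !![0, t; 0, 0] = 0 := by
    ext i j; fin_cases i <;> fin_cases j <;> simp [Matrix.mul_apply, Fin.sum_univ_two]
  have h3 := exp_sq _ h2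
  unfold Phi matFlow
  rw [h, h3]
  ext i
  fin_cases i <;>
    simp [Matrix.mulVec, dotProduct, Fin.sum_univ_two, V, Matrix.one_apply,
      EuclideanSpace.equiv]

lemma norm_Phi_pos_s18 {x : Vec 2} (hx : ‖x‖ = 1) (t : ℝ) : 0 < ‖Phi t x‖ := by
  rw [norm_pos_iff]
  intro h
  rw [flow_eq] at h
  have h0 := congrArg (fun v : Vec 2 => v 1) h
  simp only [V_one'] at h0
  have h1 := congrArg (fun v : Vec 2 => v 0) h
  simp only [V_zero'] at h1
  have hx1 : x 1 = 0 := h0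
  have hx0 : x 0 = 0 := by simpa [hx1] using h1
  rw [← V_eta x, hx0, hx1, norm_V] at hx
  norm_num at hx

lemma SF_def (t : ℝ) (x : Vec 2) : SF t x = ‖Phi t x‖⁻¹ • Phi t x := rfl

lemma norm_SF {x : Vec 2} (hx : ‖x‖ = 1) (t : ℝ) : ‖SF t x‖ = 1 := by
  rw [SF_def, norm_smul, norm_inv, norm_norm]
  exact inv_mul_cancel₀ (ne_of_gt (norm_Phi_pos_s18 hx t))

lemma norm_e : ‖V 1 0‖ = 1 := by rw [norm_V]; norm_num
lemma norm_me : ‖V (-1) 0‖ = 1 := by rw [norm_V]; norm_num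

lemma SF_fix_e (t : ℝ) : SF t (V 1 0) = V 1 0 := by
  rw [SF_def, flow_eq]
  simp [norm_e]
lemma SF_fix_me (t : ℝ) : SF t (V (-1) 0) = V (-1) 0 := by
  rw [SF_def, flow_eq]
  simp [norm_me]

lemma Phi_smul_s18 (t c : ℝ) (x : Vec 2) : Phi t (c • x) = c • Phi t x := by
  rw [flow_eq, flow_eq, smul_V]
  have h0 : (c • x) 0 = c * x 0 := rfl
  have h1 : (c • x) 1 = c * x 1 := rfl
  rw [h0, h1]
  congr 1
  ring

lemma Phi_comp (s t : ℝ) (x : Vec 2) : Phi s (Phi t x) = Phi (s + t) x := by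
  rw [flow_eq, flow_eq, flow_eq]
  simp only [V_zero', V_one']
  congr 1
  ring

lemma Phi_zero_s18 (x : Vec 2) : Phi 0 x = x := by
  rw [flow_eq]; simpa using V_eta x

lemma SF_back {y : Vec 2} (hy : ‖y‖ = 1) (t : ℝ) : SF t (SF (-t) y) = y := by
  have hc : 0 < ‖Phi (-t) y‖ := norm_Phi_pos_s18 hy (-t)
  have hcpos : (0:ℝ) < ‖Phi (-t) y‖⁻¹ := inv_pos.mpr hc
  have key : Phi t (SF (-t) y) = ‖Phi (-t) y‖⁻¹ • y := by
    rw [SF_def, Phi_smul_s18, Phi_comp, add_neg_cancel, Phi_zero_s18]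
  rw [SF_def, key, norm_smul, hy, Real.norm_eq_abs, abs_of_pos hcpos, mul_one,
    smul_smul, inv_mul_cancel₀ (ne_of_gt hcpos), one_smul]

lemma dist_V_le (a b c d : ℝ) : dist (V a b) (V c d) ≤ |a - c| + |b - d| := by
  rw [dist_V]
  have h1 : (a - c) ^ 2 + (b - d) ^ 2 ≤ (|a - c| + |b - d|) ^ 2 := by
    rw [add_sq]
    have : (a-c)^2 = |a-c|^2 := (sq_abs _).symm
    have : (b-d)^2 = |b-d|^2 := (sq_abs _).symm
    nlinarith [abs_nonneg (a-c), abs_nonneg (b-d), sq_abs (a-c), sq_abs (b-d)]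
  calc Real.sqrt ((a - c) ^ 2 + (b - d) ^ 2) ≤ Real.sqrt ((|a - c| + |b - d|) ^ 2) :=
        Real.sqrt_le_sqrt h1
    _ = |a - c| + |b - d| := Real.sqrt_sq (by positivity)

def nrm (v : Vec 2) : Vec 2 := ‖v‖⁻¹ • v

lemma nrm_contAt {v : Vec 2} (hv : v ≠ 0) : ContinuousAt nrm v := by
  have h1 : ContinuousAt (fun w : Vec 2 => ‖w‖⁻¹) v :=
    (continuous_norm.continuousAt).inv₀ (norm_ne_zero_iff.mpr hv)
  exact h1.smul continuousAt_id

lemma tendsto_aux (a b c : ℝ) :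
    Filter.Tendsto (fun t : ℝ => V (a / t + b) (c / t)) Filter.atTop
      (nhds (V b 0)) := by
  rw [tendsto_iff_dist_tendsto_zero]
  have hb : ∀ t : ℝ, dist (V (a / t + b) (c / t)) (V b 0)
      ≤ |a / t| + |c / t| := by
    intro t
    have := dist_V_le (a / t + b) (c / t) b 0
    simpa using this
  have h0 : Filter.Tendsto (fun t : ℝ => |a / t| + |c / t|) Filter.atTop (nhds 0) := by
    have hinv := tendsto_inv_atTop_zero (𝕜 := ℝ)
    have h1 : Filter.Tendsto (fun t : ℝ => a / t) Filter.atTop (nhds 0) := by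
      simpa [div_eq_mul_inv] using hinv.const_mul a
    have h2 : Filter.Tendsto (fun t : ℝ => c / t) Filter.atTop (nhds 0) := by
      simpa [div_eq_mul_inv] using hinv.const_mul c
    simpa using (h1.abs.add h2.abs)
  exact squeeze_zero (fun t => dist_nonneg) hb h0

lemma nrm_smul {cc : ℝ} (hc : 0 < cc) (v : Vec 2) : nrm (cc • v) = nrm v := by
  unfold nrm
  rw [norm_smul, Real.norm_eq_abs, abs_of_pos hc, smul_smul, mul_inv]
  congr 1
  rcases eq_or_ne ‖v‖ 0 with h | h
  · simp [h]
  · field_simp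

lemma tendsto_fwd {x : Vec 2} (h : x 1 ≠ 0) :
    Filter.Tendsto (fun t : ℝ => SF t x) Filter.atTop (nhds (nrm (V (x 1) 0))) := by
  have hcomp : Filter.Tendsto (fun t : ℝ => nrm (V (x 0 / t + x 1) (x 1 / t)))
      Filter.atTop (nhds (nrm (V (x 1) 0))) := by
    have hVne : V (x 1) 0 ≠ 0 := by
      intro hz
      exact h (congrArg (fun v : Vec 2 => v 0) hz)
    exact ((nrm_contAt hVne).tendsto.comp (tendsto_aux (x 0) (x 1) (x 1)))
  refine hcomp.congr' ?_
  filter_upwards [Filter.Ioi_mem_atTop (0:ℝ)] with t ht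
  have ht' : (0:ℝ) < t := ht
  have key : Phi t x = t • V (x 0 / t + x 1) (x 1 / t) := by
    rw [flow_eq, smul_V]
    congr 1 <;> field_simp <;> ring
  show nrm (V (x 0 / t + x 1) (x 1 / t)) = SF t x
  rw [SF_def, key]
  exact (nrm_smul ht' _).symm

lemma tendsto_bwd {y : Vec 2} (h : y 1 ≠ 0) :
    Filter.Tendsto (fun t : ℝ => SF (-t) y) Filter.atTop (nhds (nrm (V (-(y 1)) 0))) := by
  have hVne : V (-(y 1)) 0 ≠ 0 := by
    intro hz
    exact h (neg_eq_zero.mp (congrArg (fun v : Vec 2 => v 0) hz))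
  have hcomp : Filter.Tendsto (fun t : ℝ => nrm (V (y 0 / t + -(y 1)) (y 1 / t)))
      Filter.atTop (nhds (nrm (V (-(y 1)) 0))) :=
    (nrm_contAt hVne).tendsto.comp (tendsto_aux (y 0) (-(y 1)) (y 1))
  refine hcomp.congr' ?_
  filter_upwards [Filter.Ioi_mem_atTop (0:ℝ)] with t ht
  have ht' : (0:ℝ) < t := ht
  have key : Phi (-t) y = t • V (y 0 / t + -(y 1)) (y 1 / t) := by
    rw [flow_eq, smul_V]
    congr 1 <;> field_simp <;> ring
  show nrm (V (y 0 / t + -(y 1)) (y 1 / t)) = SF (-t) y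
  rw [SF_def, key]
  exact (nrm_smul ht' _).symm

lemma nrm_V_pos {c : ℝ} (hc : 0 < c) : nrm (V c 0) = V 1 0 := by
  unfold nrm
  rw [norm_V]
  have : Real.sqrt (c ^ 2 + 0 ^ 2) = c := by
    rw [show c ^ 2 + 0 ^ 2 = c ^ 2 by ring, Real.sqrt_sq hc.le]
  rw [this, smul_V, mul_zero, inv_mul_cancel₀ (ne_of_gt hc)]

lemma nrm_V_neg {c : ℝ} (hc : c < 0) : nrm (V c 0) = V (-1) 0 := by
  unfold nrm
  rw [norm_V]
  have : Real.sqrt (c ^ 2 + 0 ^ 2) = -c := by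
    rw [show c ^ 2 + 0 ^ 2 = c ^ 2 by ring, ← sq_abs, Real.sqrt_sq (abs_nonneg c),
      abs_of_neg hc]
  rw [this, smul_V, mul_zero]
  congr 1
  rw [inv_neg, neg_mul, inv_mul_cancel₀ hc.ne]

lemma sphere_x1_zero {x : Vec 2} (hx : ‖x‖ = 1) (h : x 1 = 0) :
    x = V 1 0 ∨ x = V (-1) 0 := by
  have hx' : |x 0| = 1 := by
    rw [← V_eta x, norm_V, h] at hx
    rwa [show x 0 ^ 2 + 0 ^ 2 = x 0 ^ 2 by ring, ← sq_abs,
      Real.sqrt_sq (abs_nonneg _)] at hx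
  rcases (abs_eq (by norm_num : (0:ℝ) ≤ 1)).mp hx' with h3 | h3
  · left; rw [← V_eta x, h3, h]
  · right; rw [← V_eta x, h3, h]

lemma exists_near_e (ε : ℝ) (hε : 0 < ε) :
    ∃ w : Vec 2, ‖w‖ = 1 ∧ w 1 < 0 ∧ dist w (V 1 0) < ε := by
  set δ : ℝ := min (ε / 3) (1 / 2) with hδdef
  have hδpos : 0 < δ := lt_min (by linarith) (by norm_num)
  have hδle : δ ≤ 1 / 2 := min_le_right _ _
  have hδε : δ ≤ ε / 3 := min_le_left _ _
  have hδ1 : δ ≤ 1 := by linarith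
  have h1δ : (0:ℝ) ≤ 1 - δ ^ 2 := by nlinarith
  refine ⟨V (Real.sqrt (1 - δ ^ 2)) (-δ), ?_, by simpa using hδpos, ?_⟩
  · rw [norm_V, Real.sq_sqrt h1δ, show 1 - δ ^ 2 + (-δ) ^ 2 = 1 by ring, Real.sqrt_one]
  · rw [dist_V]
    have hs : 1 - δ ≤ Real.sqrt (1 - δ ^ 2) := by
      rw [show (1:ℝ) - δ ^ 2 = (1 - δ) * (1 + δ) by ring]
      nlinarith [Real.sq_sqrt (show (0:ℝ) ≤ (1 - δ) * (1 + δ) by nlinarith),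
        Real.sqrt_nonneg ((1 - δ) * (1 + δ))]
    have hs2 : Real.sqrt (1 - δ ^ 2) ≤ 1 := by
      have := Real.sqrt_le_sqrt (show 1 - δ ^ 2 ≤ 1 by nlinarith)
      simpa using this
    have hb : (Real.sqrt (1 - δ ^ 2) - 1) ^ 2 + (-δ - 0) ^ 2 ≤ 2 * δ ^ 2 := by
      nlinarith
    calc Real.sqrt ((Real.sqrt (1 - δ ^ 2) - 1) ^ 2 + (-δ - 0) ^ 2)
        ≤ Real.sqrt (2 * δ ^ 2) := Real.sqrt_le_sqrt hb
      _ ≤ Real.sqrt ((2 * δ) ^ 2) := Real.sqrt_le_sqrt (by nlinarith)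
      _ = 2 * δ := Real.sqrt_sq (by linarith)
      _ < ε := by linarith

lemma exists_near_me (ε : ℝ) (hε : 0 < ε) :
    ∃ w : Vec 2, ‖w‖ = 1 ∧ 0 < w 1 ∧ dist w (V (-1) 0) < ε := by
  obtain ⟨w, hw1, hw2, hw3⟩ := exists_near_e ε hε
  refine ⟨-w, by rw [norm_neg, hw1], by simpa using hw2, ?_⟩
  have : dist (-w) (V (-1) 0) = dist w (V 1 0) := by
    rw [show V (-1) 0 = -(V 1 0) from by rw [neg_V]; norm_num, dist_neg_neg]
  rw [this]; exact hw3


lemma exists_time {f : ℝ → Vec 2} {L : Vec 2} (hf : Filter.Tendsto f Filter.atTop (nhds L))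
    (ε T : ℝ) (hε : 0 < ε) : ∃ t, T ≤ t ∧ dist (f t) L < ε := by
  have h := (Metric.tendsto_nhds.mp hf ε hε).and (Filter.eventually_ge_atTop T)
  obtain ⟨t, h1, h2⟩ := h.exists
  exact ⟨t, h2, h1⟩

theorem stmt18 :
    ChainTransOn (sphFlow (matFlow 2 !![0, 1; 0, 0])) (sphere1 2) (sphere1 2) := by
  show ChainTransOn SF (sphere1 2) (sphere1 2)
  intro x hx y hy ε T hε hT
  have hxs : ‖x‖ = 1 := hx
  have hys : ‖y‖ = 1 := hy
  have he : (V 1 0) ∈ sphere1 2 := norm_e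
  have hm : (V (-1) 0) ∈ sphere1 2 := norm_me
  have cEE : ChainIn SF (sphere1 2) ε T (V 1 0) (V 1 0) :=
    chain_single_s18 he he le_rfl (by rw [SF_fix_e]; simpa using hε)
  have cMM : ChainIn SF (sphere1 2) ε T (V (-1) 0) (V (-1) 0) :=
    chain_single_s18 hm hm le_rfl (by rw [SF_fix_me]; simpa using hε)
  have cEM : ChainIn SF (sphere1 2) ε T (V 1 0) (V (-1) 0) := by
    obtain ⟨w, hw1, hw2, hw3⟩ := exists_near_e ε hε
    have step1 : ChainIn SF (sphere1 2) ε T (V 1 0) w :=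
      chain_single_s18 he hw1 le_rfl (by rw [SF_fix_e, dist_comm]; exact hw3)
    have hlim := tendsto_fwd (x := w) (ne_of_lt hw2)
    rw [nrm_V_neg hw2] at hlim
    obtain ⟨t, ht, hd⟩ := exists_time hlim ε T hε
    exact chain_comp step1 (chain_single_s18 hw1 hm ht hd)
  have cME : ChainIn SF (sphere1 2) ε T (V (-1) 0) (V 1 0) := by
    obtain ⟨w, hw1, hw2, hw3⟩ := exists_near_me ε hε
    have step1 : ChainIn SF (sphere1 2) ε T (V (-1) 0) w :=
      chain_single_s18 hm hw1 le_rfl (by rw [SF_fix_me, dist_comm]; exact hw3)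
    have hlim := tendsto_fwd (x := w) (ne_of_gt hw2)
    rw [nrm_V_pos hw2] at hlim
    obtain ⟨t, ht, hd⟩ := exists_time hlim ε T hε
    exact chain_comp step1 (chain_single_s18 hw1 he ht hd)
  have cPQ : ∀ p, (p = V 1 0 ∨ p = V (-1) 0) → ∀ q, (q = V 1 0 ∨ q = V (-1) 0) →
      ChainIn SF (sphere1 2) ε T p q := by
    rintro p (rfl | rfl) q (rfl | rfl)
    · exact cEE
    · exact cEM
    · exact cME
    · exact cMM
  have hA : ∃ p, (p = V 1 0 ∨ p = V (-1) 0) ∧ ChainIn SF (sphere1 2) ε T x p := by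
    rcases lt_trichotomy (x 1) 0 with h | h | h
    · have hlim := tendsto_fwd (x := x) (ne_of_lt h)
      rw [nrm_V_neg h] at hlim
      obtain ⟨t, ht, hd⟩ := exists_time hlim ε T hε
      exact ⟨V (-1) 0, Or.inr rfl, chain_single_s18 hx hm ht hd⟩
    · obtain h2 | h2 := sphere_x1_zero hxs h
      · exact ⟨V 1 0, Or.inl rfl, by rw [h2]; exact cEE⟩
      · exact ⟨V (-1) 0, Or.inr rfl, by rw [h2]; exact cMM⟩
    · have hlim := tendsto_fwd (x := x) (ne_of_gt h)
      rw [nrm_V_pos h] at hlim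
      obtain ⟨t, ht, hd⟩ := exists_time hlim ε T hε
      exact ⟨V 1 0, Or.inl rfl, chain_single_s18 hx he ht hd⟩
  have hD : ∃ q, (q = V 1 0 ∨ q = V (-1) 0) ∧ ChainIn SF (sphere1 2) ε T q y := by
    rcases lt_trichotomy (y 1) 0 with h | h | h
    · have hlim := tendsto_bwd (y := y) (ne_of_lt h)
      rw [nrm_V_pos (by linarith : (0:ℝ) < -(y 1))] at hlim
      obtain ⟨t, ht, hd⟩ := exists_time hlim ε T hε
      have hw1 : ‖SF (-t) y‖ = 1 := norm_SF hys (-t)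
      have step1 : ChainIn SF (sphere1 2) ε T (V 1 0) (SF (-t) y) :=
        chain_single_s18 he hw1 le_rfl (by rw [SF_fix_e, dist_comm]; exact hd)
      have step2 : ChainIn SF (sphere1 2) ε T (SF (-t) y) y :=
        chain_single_s18 hw1 hy ht (by rw [SF_back hys]; simpa using hε)
      exact ⟨V 1 0, Or.inl rfl, chain_comp step1 step2⟩
    · obtain h2 | h2 := sphere_x1_zero hys h
      · exact ⟨V 1 0, Or.inl rfl, by rw [h2]; exact cEE⟩
      · exact ⟨V (-1) 0, Or.inr rfl, by rw [h2]; exact cMM⟩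
    · have hlim := tendsto_bwd (y := y) (ne_of_gt h)
      rw [nrm_V_neg (by linarith : -(y 1) < 0)] at hlim
      obtain ⟨t, ht, hd⟩ := exists_time hlim ε T hε
      have hw1 : ‖SF (-t) y‖ = 1 := norm_SF hys (-t)
      have step1 : ChainIn SF (sphere1 2) ε T (V (-1) 0) (SF (-t) y) :=
        chain_single_s18 hm hw1 le_rfl (by rw [SF_fix_me, dist_comm]; exact hd)
      have step2 : ChainIn SF (sphere1 2) ε T (SF (-t) y) y :=
        chain_single_s18 hw1 hy ht (by rw [SF_back hys]; simpa using hε)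
      exact ⟨V (-1) 0, Or.inr rfl, chain_comp step1 step2⟩
  obtain ⟨p, hp, cXP⟩ := hA
  obtain ⟨q, hq, cQY⟩ := hD
  exact chain_comp cXP (chain_comp (cPQ p hp q hq) cQY)
end
end
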